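/- Let A>0 and suppose (n-1)π/A < R < nπ/A for some n ∈ ℕ. Then the equations k_1 = ±(A/2) cos(2k_1 R) e^{-2k_1 R tan(2k_1 R)} have exactly n simple solutions {k_{1,j}}_{j=1}^{n} with k_1 > 0 and tan(2k_1 R) > 0, and these satisfy k_{1,j} ∈ ((j-1)π/(2R), (2j-1)π/(4R)) for j = 1,…,n. -/

import Mathlib

open Real Set

/-- The fixed-point equations `k₁ = ±(A/2) cos(2k₁R) e^{-2k₁R tan(2k₁R)}`. -/
def SolEq (A R x : ℝ) : Prop :=
  x = (A / 2) * Real.cos (2 * x * R) * Real.exp (-2 * x * R * Real.tan (2 * x * R)) ∨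
  x = -((A / 2) * Real.cos (2 * x * R) * Real.exp (-2 * x * R * Real.tan (2 * x * R)))

noncomputable def Ffun (A R x : ℝ) : ℝ :=
  A / 2 * |Real.cos (2 * x * R)| * Real.exp (-2 * x * R * Real.tan (2 * x * R))

lemma abs_cos_nat_sub (j : ℕ) (y : ℝ) : |Real.cos (y - j * π)| = |Real.cos y| := by
  have hper : Function.Periodic (fun y : ℝ => |Real.cos y|) π := by
    intro y; simp [Real.cos_add_pi]
  exact hper.sub_nat_mul_eq j

lemma tan_nat_sub (j : ℕ) (y : ℝ) : Real.tan (y - j * π) = Real.tan y :=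
  Real.tan_periodic.sub_nat_mul_eq j

lemma shape (j : ℕ) {y : ℝ} (h1 : (j : ℝ) * π < y) (h2 : y < j * π + π / 2) :
    0 < Real.tan y ∧ |Real.cos y| = Real.cos (y - j * π) := by
  have h0 : 0 < y - j * π := by linarith
  have h2' : y - j * π < π / 2 := by linarith
  constructor
  · rw [← tan_nat_sub j y]
    exact Real.tan_pos_of_pos_of_lt_pi_div_two h0 h2'
  · rw [← abs_cos_nat_sub j y]
    exact abs_of_pos (Real.cos_pos_of_mem_Ioo ⟨by linarith [Real.pi_pos], h2'⟩)

lemma cos_ne_zero_of (j : ℕ) {y : ℝ} (h1 : (j : ℝ) * π ≤ y) (h2 : y < j * π + π / 2) :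
    Real.cos y ≠ 0 := by
  have hpos : 0 < |Real.cos y| := by
    rw [← abs_cos_nat_sub j y]
    exact abs_pos.mpr (Real.cos_pos_of_mem_Ioo ⟨by linarith [Real.pi_pos], by linarith⟩).ne'
  intro h; simp [h] at hpos

lemma solEq_iff {A R x : ℝ} (hA : 0 < A) (hx : 0 < x) : SolEq A R x ↔ x = Ffun A R x := by
  set E := Real.exp (-2 * x * R * Real.tan (2 * x * R)) with hEdef
  have hE : 0 < E := Real.exp_pos _
  have habs : ∀ u : ℝ, |A / 2 * u * E| = A / 2 * |u| * E := by
    intro u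
    rw [abs_mul, abs_mul, abs_of_pos hE, abs_of_pos (by linarith : (0:ℝ) < A / 2)]
  constructor
  · rintro (h | h)
    · rw [Ffun, ← habs, ← h, abs_of_pos hx]
    · rw [Ffun, ← habs, ← abs_neg, ← h, abs_of_pos hx]
  · intro h
    rcases le_or_gt 0 (Real.cos (2 * x * R)) with hc | hc
    · left; nth_rewrite 1 [h]; rw [Ffun, abs_of_nonneg hc]
    · right; nth_rewrite 1 [h]; rw [Ffun, abs_of_neg hc]; ring

section Main

variable {A R : ℝ}

lemma mem_to_y {j : ℕ} {x : ℝ} (hR : 0 < R)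
    (hx : x ∈ Ioo ((j : ℝ) * π / (2 * R)) ((2 * (j : ℝ) + 1) * π / (4 * R))) :
    (j : ℝ) * π < 2 * x * R ∧ 2 * x * R < j * π + π / 2 := by
  obtain ⟨h1, h2⟩ := hx
  rw [div_lt_iff₀ (by positivity)] at h1
  rw [lt_div_iff₀ (by positivity)] at h2
  constructor <;> nlinarith

lemma y_to_mem {j : ℕ} {x : ℝ} (hR : 0 < R)
    (h1 : (j : ℝ) * π < 2 * x * R) (h2 : 2 * x * R < j * π + π / 2) :
    x ∈ Ioo ((j : ℝ) * π / (2 * R)) ((2 * (j : ℝ) + 1) * π / (4 * R)) := by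
  constructor
  · rw [div_lt_iff₀ (by positivity)]; nlinarith
  · rw [lt_div_iff₀ (by positivity)]; nlinarith

lemma tan_pos_of_mem {j : ℕ} {x : ℝ} (hR : 0 < R)
    (hx : x ∈ Ioo ((j : ℝ) * π / (2 * R)) ((2 * (j : ℝ) + 1) * π / (4 * R))) :
    0 < Real.tan (2 * x * R) := by
  obtain ⟨h1, h2⟩ := mem_to_y hR hx
  exact (shape j h1 h2).1

lemma F_anti (hA : 0 < A) (hR : 0 < R) (j : ℕ) :
    StrictAntiOn (Ffun A R) (Ioo ((j : ℝ) * π / (2 * R)) ((2 * (j : ℝ) + 1) * π / (4 * R))) := by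
  intro x1 hx1 x2 hx2 h12
  obtain ⟨h11, h12'⟩ := mem_to_y hR hx1
  obtain ⟨h21, h22⟩ := mem_to_y hR hx2
  have hjpi : (0 : ℝ) ≤ (j : ℝ) * π := by positivity
  have hy : 2 * x1 * R < 2 * x2 * R := by nlinarith
  obtain ⟨ht1, hc1⟩ := shape j h11 h12'
  obtain ⟨ht2, hc2⟩ := shape j h21 h22
  have hpi := Real.pi_pos
  have hccomp : Real.cos (2 * x2 * R - j * π) < Real.cos (2 * x1 * R - j * π) :=
    Real.strictAntiOn_cos ⟨by linarith, by linarith⟩ ⟨by linarith, by linarith⟩ (by linarith)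
  have htcomp : Real.tan (2 * x1 * R) < Real.tan (2 * x2 * R) := by
    rw [← tan_nat_sub j (2 * x1 * R), ← tan_nat_sub j (2 * x2 * R)]
    exact Real.strictMonoOn_tan ⟨by linarith, by linarith⟩ ⟨by linarith, by linarith⟩
      (by linarith)
  have hexp : Real.exp (-2 * x2 * R * Real.tan (2 * x2 * R)) <
      Real.exp (-2 * x1 * R * Real.tan (2 * x1 * R)) := by
    apply Real.exp_lt_exp.mpr
    nlinarith
  have hcabs : |Real.cos (2 * x2 * R)| < |Real.cos (2 * x1 * R)| := by
    rw [hc1, hc2]; exact hccomp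
  have hcpos : 0 < |Real.cos (2 * x2 * R)| := by
    rw [hc2]
    exact Real.cos_pos_of_mem_Ioo ⟨by linarith, by linarith⟩
  have he2 : 0 < Real.exp (-2 * x2 * R * Real.tan (2 * x2 * R)) := Real.exp_pos _
  have he1 : 0 < Real.exp (-2 * x1 * R * Real.tan (2 * x1 * R)) := Real.exp_pos _
  unfold Ffun
  have step1 : A / 2 * |Real.cos (2 * x2 * R)| * Real.exp (-2 * x2 * R * Real.tan (2 * x2 * R)) <
      A / 2 * |Real.cos (2 * x1 * R)| * Real.exp (-2 * x2 * R * Real.tan (2 * x2 * R)) := by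
    apply mul_lt_mul_of_pos_right _ he2
    apply mul_lt_mul_of_pos_left hcabs (by positivity)
  have step2 : A / 2 * |Real.cos (2 * x1 * R)| * Real.exp (-2 * x2 * R * Real.tan (2 * x2 * R)) <
      A / 2 * |Real.cos (2 * x1 * R)| * Real.exp (-2 * x1 * R * Real.tan (2 * x1 * R)) := by
    apply mul_lt_mul_of_pos_left hexp
    have : 0 < |Real.cos (2 * x1 * R)| := lt_trans hcpos hcabs
    positivity
  linarith

lemma F_contOn {s : Set ℝ} (hs : ∀ x ∈ s, Real.cos (2 * x * R) ≠ 0) :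
    ContinuousOn (Ffun A R) s := by
  have hc : Continuous fun x : ℝ => 2 * x * R := by fun_prop
  have htan : ContinuousOn (fun x => Real.tan (2 * x * R)) s :=
    Real.continuousOn_tan.comp hc.continuousOn fun x hx => hs x hx
  have harg : ContinuousOn (fun x => -2 * x * R * Real.tan (2 * x * R)) s := by
    have : ContinuousOn (fun x : ℝ => -2 * x * R) s := (by fun_prop : Continuous fun x : ℝ => -2 * x * R).continuousOn
    exact this.mul htan
  exact (continuousOn_const.mul ((Real.continuous_cos.comp hc).abs.continuousOn)).mul
    (Real.continuous_exp.comp_continuousOn harg)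

lemma F_left (hR : 0 < R) (j : ℕ) : Ffun A R ((j : ℝ) * π / (2 * R)) = A / 2 := by
  have h : 2 * ((j : ℝ) * π / (2 * R)) * R = (j : ℝ) * π := by field_simp
  rw [Ffun, h, Real.tan_nat_mul_pi, mul_zero, Real.exp_zero, mul_one]
  have h1 : |Real.cos ((j : ℝ) * π)| = 1 := by
    simpa using (abs_cos_nat_sub j ((j : ℝ) * π)).symm
  rw [h1, mul_one]

lemma exists_fixed (hA : 0 < A) (hR : 0 < R) (j : ℕ) (hj : (j : ℝ) * π < A * R) :
    ∃ z ∈ Ioo ((j : ℝ) * π / (2 * R)) ((2 * (j : ℝ) + 1) * π / (4 * R)), z = Ffun A R z := by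
  have hpi := Real.pi_pos
  set a := (j : ℝ) * π / (2 * R) with ha
  set b := (2 * (j : ℝ) + 1) * π / (4 * R) with hb
  have hab : a < b := by
    rw [ha, hb, div_lt_div_iff₀ (by positivity) (by positivity)]
    nlinarith
  have ha0 : 0 ≤ a := by positivity
  have hb0 : 0 < b := by positivity
  have haA : a < A / 2 := by
    rw [ha, div_lt_iff₀ (by positivity)]; nlinarith
  -- the cosine bound tends to zero at b
  have hcosb : |Real.cos (2 * b * R)| = 0 := by
    have h2b : 2 * b * R = (j : ℝ) * π + π / 2 := by rw [hb]; field_simp; ring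
    rw [h2b, ← abs_cos_nat_sub j]
    simp
  have htends : Filter.Tendsto (fun x => Ffun A R x) (nhdsWithin b (Ioo a b)) (nhds 0) := by
    apply squeeze_zero' (g := fun x => A / 2 * |Real.cos (2 * x * R)|)
    · filter_upwards with x
      have := Real.exp_pos (-2 * x * R * Real.tan (2 * x * R))
      rw [Ffun]; positivity
    · filter_upwards [self_mem_nhdsWithin] with x hx
      obtain ⟨h1, h2⟩ := mem_to_y hR hx
      have ht : 0 < Real.tan (2 * x * R) := (shape j h1 h2).1
      have hx0 : 0 ≤ x := le_trans ha0 (le_of_lt hx.1)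
      have hexp : Real.exp (-2 * x * R * Real.tan (2 * x * R)) ≤ 1 := by
        rw [Real.exp_le_one_iff]
        nlinarith [mul_nonneg (mul_nonneg (by linarith : (0:ℝ) ≤ 2 * x) hR.le) ht.le]
      rw [Ffun]
      exact mul_le_of_le_one_right (by positivity) hexp
    · have : Filter.Tendsto (fun x => A / 2 * |Real.cos (2 * x * R)|) (nhds b)
          (nhds (A / 2 * |Real.cos (2 * b * R)|)) := by
        apply Filter.Tendsto.const_mul
        exact ((Real.continuous_cos.comp (by fun_prop)).abs.tendsto b)
      rw [hcosb, mul_zero] at this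
      exact this.mono_left nhdsWithin_le_nhds
  -- find c with Ffun c < c
  have hid : Filter.Tendsto (fun x : ℝ => x) (nhdsWithin b (Ioo a b)) (nhds b) :=
    (continuous_id.tendsto b).mono_left nhdsWithin_le_nhds
  have hdiff : Filter.Tendsto (fun x => x - Ffun A R x) (nhdsWithin b (Ioo a b)) (nhds b) := by
    have := hid.sub htends
    simpa using this
  have : Filter.NeBot (nhdsWithin b (Ioo a b)) := right_nhdsWithin_Ioo_neBot hab
  have hev : ∀ᶠ x in nhdsWithin b (Ioo a b), 0 < x - Ffun A R x :=
    hdiff.eventually (eventually_gt_nhds hb0)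
  obtain ⟨c, hcpos, hcmem⟩ := (hev.and self_mem_nhdsWithin).exists
  -- IVT on [a, c]
  have hcont : ContinuousOn (Ffun A R) (Icc a c) := by
    apply F_contOn
    intro x hx
    have hy1 : (j : ℝ) * π ≤ 2 * x * R := by
      have : a ≤ x := hx.1
      rw [ha, div_le_iff₀ (by positivity)] at this
      nlinarith
    have hy2 : 2 * x * R < j * π + π / 2 := by
      have hxc : x ≤ c := hx.2
      have := (mem_to_y hR hcmem).2
      nlinarith
    exact cos_ne_zero_of j hy1 hy2
  have hgc : ContinuousOn (fun x => x - Ffun A R x) (Icc a c) :=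
    continuousOn_id.sub hcont
  have hga : a - Ffun A R a < 0 := by rw [F_left hR]; linarith
  have hgc0 : 0 < c - Ffun A R c := hcpos
  have hac : a ≤ c := le_of_lt hcmem.1
  have := intermediate_value_Ioo hac hgc
  have h0mem : (0 : ℝ) ∈ Ioo (a - Ffun A R a) (c - Ffun A R c) := ⟨hga, hgc0⟩
  obtain ⟨z, hz, hz0⟩ := this h0mem
  have hzz : z = Ffun A R z := by
    have h' : z - Ffun A R z = 0 := hz0
    linarith
  exact ⟨z, ⟨hz.1, lt_trans hz.2 hcmem.2⟩, hzz⟩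

end Main

lemma find_j {y : ℝ} (hy : 0 < y) (ht : 0 < Real.tan y) :
    ∃ j : ℕ, (j : ℝ) * π < y ∧ y < j * π + π / 2 := by
  have hpi := Real.pi_pos
  set j := ⌊y / π⌋₊ with hjdef
  have h1 : (j : ℝ) ≤ y / π := Nat.floor_le (by positivity)
  have h2 : y / π < j + 1 := Nat.lt_floor_add_one _
  have h1' : (j : ℝ) * π ≤ y := (le_div_iff₀ hpi).mp h1
  have h2' : y < ((j : ℝ) + 1) * π := by
    have := (div_lt_iff₀ hpi).mp h2
    linarith
  refine ⟨j, ?_, ?_⟩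
  · rcases eq_or_lt_of_le h1' with h | h
    · exfalso; rw [← h, Real.tan_nat_mul_pi] at ht; exact lt_irrefl 0 ht
    · exact h
  · by_contra hcon
    push_neg at hcon
    have hsub := tan_nat_sub j y
    rcases eq_or_lt_of_le hcon with h | h
    · have hh : y - j * π = π / 2 := by linarith
      rw [← hsub, hh, Real.tan_pi_div_two] at ht
      exact lt_irrefl 0 ht
    · have hsin : 0 < Real.sin (y - j * π) :=
        Real.sin_pos_of_pos_of_lt_pi (by linarith) (by linarith)
      have hcos : Real.cos (y - j * π) < 0 :=
        Real.cos_neg_of_pi_div_two_lt_of_lt (by linarith) (by linarith)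
      have hneg : Real.tan (y - j * π) < 0 := by
        rw [Real.tan_eq_sin_div_cos]
        exact div_neg_of_pos_of_neg hsin hcos
      rw [hsub] at hneg
      linarith



/-- If `(n-1)π/A < R < nπ/A`, then the equations
`k₁ = ±(A/2)cos(2k₁R)e^{-2k₁R tan(2k₁R)}` have exactly `n` solutions with `k₁ > 0` and
`tan(2k₁R) > 0`, and the `j`-th solution lies in `((j-1)π/(2R), (2j-1)π/(4R))`
(indexing `j = 1, …, n`; here `j : Fin n` runs over `0, …, n-1`). -/
theorem exactly_n_solutions (A R : ℝ) (hA : 0 < A) (n : ℕ) (hn : 1 ≤ n)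
    (hR1 : ((n : ℝ) - 1) * Real.pi / A < R) (hR2 : R < (n : ℝ) * Real.pi / A) :
    ∃ k : Fin n → ℝ, Function.Injective k ∧
      (∀ j : Fin n,
        k j ∈ Set.Ioo ((j : ℝ) * Real.pi / (2 * R)) ((2 * (j : ℝ) + 1) * Real.pi / (4 * R))) ∧
      (∀ j : Fin n, 0 < k j ∧ 0 < Real.tan (2 * k j * R) ∧ SolEq A R (k j)) ∧
      (∀ x : ℝ, 0 < x → 0 < Real.tan (2 * x * R) → SolEq A R x → ∃ j : Fin n, x = k j) := by
  have hpi := Real.pi_pos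
  have hn1 : (1 : ℝ) ≤ (n : ℝ) := by exact_mod_cast hn
  have hR : 0 < R := by
    have h0 : (0 : ℝ) ≤ ((n : ℝ) - 1) * π / A := by
      apply div_nonneg _ hA.le
      nlinarith
    linarith
  have hARn : A * R < (n : ℝ) * π := by
    rw [lt_div_iff₀ hA] at hR2
    nlinarith
  have hjAR : ∀ j : ℕ, j < n → (j : ℝ) * π < A * R := by
    intro j hjn
    rw [div_lt_iff₀ hA] at hR1
    have hje : (j : ℝ) ≤ (n : ℝ) - 1 := by
      have : ((j : ℝ) + 1) ≤ (n : ℝ) := by exact_mod_cast hjn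
      linarith
    nlinarith
  have hex : ∀ j : Fin n, ∃ z,
      z ∈ Ioo (((j : ℕ) : ℝ) * π / (2 * R)) ((2 * ((j : ℕ) : ℝ) + 1) * π / (4 * R)) ∧
      z = Ffun A R z := by
    intro j
    obtain ⟨z, hz1, hz2⟩ := exists_fixed hA hR (j : ℕ) (hjAR (j : ℕ) j.2)
    exact ⟨z, hz1, hz2⟩
  choose k hk1 hk2 using hex
  have hkpos : ∀ j : Fin n, 0 < k j := by
    intro j
    have h0 : (0 : ℝ) ≤ ((j : ℕ) : ℝ) * π / (2 * R) := by positivity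
    linarith [(hk1 j).1]
  refine ⟨k, ?_, ?_, ?_, ?_⟩
  · -- injective
    have hmono : StrictMono k := by
      intro i j' hij
      have h1 : k i < (2 * ((i : ℕ) : ℝ) + 1) * π / (4 * R) := (hk1 i).2
      have h2 : ((j' : ℕ) : ℝ) * π / (2 * R) < k j' := (hk1 j').1
      have hle : (2 * ((i : ℕ) : ℝ) + 1) * π / (4 * R) ≤ ((j' : ℕ) : ℝ) * π / (2 * R) := by
        rw [div_le_div_iff₀ (by positivity) (by positivity)]
        have hij' : (i : ℕ) < (j' : ℕ) := hij
        have hc : (2 * ((i : ℕ) : ℝ) + 1) ≤ 2 * ((j' : ℕ) : ℝ) := by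
          exact_mod_cast (by omega : 2 * (i : ℕ) + 1 ≤ 2 * (j' : ℕ))
        have := mul_le_mul_of_nonneg_right hc (by positivity : (0:ℝ) ≤ π * (2 * R))
        nlinarith
      linarith
    exact hmono.injective
  · exact fun j => hk1 j
  · intro j
    exact ⟨hkpos j, tan_pos_of_mem hR (hk1 j), (solEq_iff hA (hkpos j)).mpr (hk2 j)⟩
  · intro x hx htx hsol
    have hxF : x = Ffun A R x := (solEq_iff hA hx).mp hsol
    obtain ⟨j, hj1, hj2⟩ := find_j (by positivity : (0 : ℝ) < 2 * x * R) htx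
    have hxm : x ∈ Ioo ((j : ℝ) * π / (2 * R)) ((2 * (j : ℝ) + 1) * π / (4 * R)) :=
      y_to_mem hR hj1 hj2
    have hxA : x ≤ A / 2 := by
      have hexp : Real.exp (-2 * x * R * Real.tan (2 * x * R)) ≤ 1 := by
        rw [Real.exp_le_one_iff]
        nlinarith [mul_nonneg (mul_nonneg (by linarith : (0:ℝ) ≤ 2 * x) hR.le) htx.le]
      have hcos : |Real.cos (2 * x * R)| ≤ 1 := Real.abs_cos_le_one _
      have e1 := mul_le_of_le_one_right
        (by positivity : (0 : ℝ) ≤ A / 2 * |Real.cos (2 * x * R)|) hexp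
      have e2 := mul_le_of_le_one_right (by linarith : (0 : ℝ) ≤ A / 2) hcos
      rw [hxF, Ffun]
      linarith
    have hjn : j < n := by
      by_contra hcon
      push_neg at hcon
      have hnj : ((n : ℕ) : ℝ) ≤ (j : ℝ) := by exact_mod_cast hcon
      nlinarith
    set jf : Fin n := ⟨j, hjn⟩ with hjf
    have hkm : k jf ∈ Ioo ((j : ℝ) * π / (2 * R)) ((2 * (j : ℝ) + 1) * π / (4 * R)) := hk1 jf
    have hkF : k jf = Ffun A R (k jf) := hk2 jf
    refine ⟨jf, ?_⟩
    rcases lt_trichotomy x (k jf) with h | h | h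
    · have h2 := F_anti hA hR j hxm hkm h
      rw [← hxF, ← hkF] at h2
      linarith
    · exact h
    · have h2 := F_anti hA hR j hkm hxm h
      rw [← hxF, ← hkF] at h2
      linarith
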